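/- Let V be a real vector space of dimension ≥ 2 and Q : V → ℝ a function such that Q(λv) = λ²Q(v) for all λ ∈ ℝ, v ∈ V, and such that the restriction of Q to every 2-dimensional subspace is a quadratic form (comes from a symmetric bilinear form on that subspace). Then Q is a quadratic form on V, i.e., ⟨u,v⟩ := (Q(u+v) − Q(u) − Q(v))/2 is a symmetric bilinear form on V with Q(v) = ⟨v,v⟩. -/
import Mathlib

theorem stmt_18 (V : Type*) [AddCommGroup V] [Module ℝ V]
    (hdim : (2 : Cardinal) ≤ Module.rank ℝ V)
    (Q : V → ℝ) (hhom : ∀ (l : ℝ) (v : V), Q (l • v) = l ^ 2 * Q v)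
    (hplane : ∀ W : Submodule ℝ V, Module.finrank ℝ ↥W = 2 →
      ∃ B : ↥W →ₗ[ℝ] ↥W →ₗ[ℝ] ℝ, (∀ x y : ↥W, B x y = B y x) ∧ ∀ w : ↥W, Q (w : V) = B w w) :
    ∃ B : V →ₗ[ℝ] V →ₗ[ℝ] ℝ, (∀ u v : V, B u v = B v u) ∧ (∀ v : V, Q v = B v v) ∧
      ∀ u v : V, B u v = (Q (u + v) - Q u - Q v) / 2 := by
  -- Step 1: any two vectors lie in a common 2-dimensional subspace.
  have plane2 : ∀ a b : V, ∃ W : Submodule ℝ V, Module.finrank ℝ W = 2 ∧ a ∈ W ∧ b ∈ W := by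
    have hpair : ∀ x y : V, LinearIndependent ℝ ![x, y] →
        ∃ W : Submodule ℝ V, Module.finrank ℝ W = 2 ∧ x ∈ W ∧ y ∈ W := by
      intro x y h
      refine ⟨Submodule.span ℝ (Set.range ![x, y]), ?_, ?_, ?_⟩
      · rw [finrank_span_eq_card h]; simp
      · exact Submodule.subset_span ⟨0, rfl⟩
      · exact Submodule.subset_span ⟨1, rfl⟩
    have hne : ∀ z : V, Submodule.span ℝ ({z} : Set V) ≠ ⊤ := by
      intro z h
      have h1 : Module.rank ℝ (Submodule.span ℝ ({z} : Set V)) ≤ 1 := by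
        simpa using rank_span_le (R := ℝ) ({z} : Set V)
      rw [h, rank_top] at h1
      exact absurd (hdim.trans h1) (by norm_num)
    have hext : ∀ z : V, z ≠ 0 → ∃ y : V, LinearIndependent ℝ ![y, z] := by
      intro z hz
      have : ∃ y : V, y ∉ Submodule.span ℝ ({z} : Set V) := by
        by_contra h; push_neg at h
        exact hne z (Submodule.eq_top_iff'.mpr h)
      obtain ⟨y, hy⟩ := this
      refine ⟨y, linearIndependent_fin2.mpr ⟨by simpa using hz, ?_⟩⟩
      intro c hc
      simp only [Matrix.cons_val_one, Matrix.head_cons, Matrix.cons_val_zero] at hc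
      exact hy (hc ▸ Submodule.smul_mem _ c (Submodule.mem_span_singleton_self z))
    intro a b
    by_cases hab : LinearIndependent ℝ ![a, b]
    · exact hpair a b hab
    · have hz : ∃ z : V, a ∈ Submodule.span ℝ ({z} : Set V) ∧
          b ∈ Submodule.span ℝ ({z} : Set V) := by
        rw [linearIndependent_fin2] at hab
        push_neg at hab
        simp only [Matrix.cons_val_one, Matrix.head_cons, Matrix.cons_val_zero] at hab
        by_cases hb : b = 0
        · exact ⟨a, Submodule.mem_span_singleton_self a, by simp [hb]⟩
        · obtain ⟨c, hc⟩ := hab hb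
          refine ⟨b, ?_, Submodule.mem_span_singleton_self b⟩
          rw [← hc]
          exact Submodule.smul_mem _ _ (Submodule.mem_span_singleton_self b)
      obtain ⟨z, haz, hbz⟩ := hz
      by_cases hz0 : z = 0
      · subst hz0
        simp only [Submodule.span_zero_singleton, Submodule.mem_bot] at haz hbz
        subst haz; subst hbz
        have : Nontrivial V := by
          rw [← rank_pos_iff_nontrivial (R := ℝ)]
          exact lt_of_lt_of_le (by norm_num) hdim
        obtain ⟨y, hy⟩ := exists_ne (0 : V)
        obtain ⟨w, hw⟩ := hext y hy
        obtain ⟨W, h2, _, _⟩ := hpair w y hw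
        exact ⟨W, h2, W.zero_mem, W.zero_mem⟩
      · obtain ⟨y, hy⟩ := hext z hz0
        obtain ⟨W, h2, _, hzW⟩ := hpair y z hy
        have hle : Submodule.span ℝ ({z} : Set V) ≤ W := by
          rw [Submodule.span_le]; simpa using hzW
        exact ⟨W, h2, hle haz, hle hbz⟩
  -- the polarization form
  set D : V → V → ℝ := fun u v => (Q (u + v) - Q u - Q v) / 2 with hD
  -- Step 2: parallelogram law and scalar homogeneity from the plane hypothesis.
  have key : ∀ (l : ℝ) (u v : V),
      (Q (u + v) + Q (u - v) = 2 * Q u + 2 * Q v) ∧ D (l • u) v = l * D u v := by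
    intro l u v
    obtain ⟨W, hW2, hu, hv⟩ := plane2 u v
    obtain ⟨B, hBsym, hBQ⟩ := hplane W hW2
    set x : ↥W := ⟨u, hu⟩
    set y : ↥W := ⟨v, hv⟩
    have e1 : Q (u + v) = B x x + 2 * B x y + B y y := by
      have := hBQ (x + y)
      simp only [Submodule.coe_add, map_add, LinearMap.add_apply] at this
      rw [show ((x : V) + y = u + v) from rfl] at this
      rw [this, hBsym y x]; ring
    have e2 : Q (u - v) = B x x - 2 * B x y + B y y := by
      have := hBQ (x - y)
      simp only [Submodule.coe_sub, map_sub, LinearMap.sub_apply] at this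
      rw [show ((x : V) - y = u - v) from rfl] at this
      rw [this, hBsym y x]; ring
    have e3 : Q u = B x x := hBQ x
    have e4 : Q v = B y y := hBQ y
    have e5 : Q (l • u + v) = l ^ 2 * B x x + 2 * l * B x y + B y y := by
      have := hBQ (l • x + y)
      simp only [Submodule.coe_add, Submodule.coe_smul, map_add, map_smul, LinearMap.add_apply,
        LinearMap.smul_apply, smul_eq_mul] at this
      rw [show (l • (x : V) + y = l • u + v) from rfl] at this
      rw [this, hBsym y x]; ring
    constructor
    · rw [e1, e2, e3, e4]; ring
    · simp only [hD]
      rw [e5, hhom l u, e1, e3, e4]; ring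
  have par : ∀ u v : V, Q (u + v) + Q (u - v) = 2 * Q u + 2 * Q v := fun u v => (key 1 u v).1
  have smulD : ∀ (l : ℝ) (u v : V), D (l • u) v = l * D u v := fun l u v => (key l u v).2
  -- Step 3: additivity in the first argument (Jordan–von Neumann).
  have addD : ∀ u v z : V, D (u + v) z = D u z + D v z := by
    intro u v z
    set m : V := (2⁻¹ : ℝ) • (u + v) with hm
    have hm2 : (2 : ℝ) • m = u + v := by rw [hm, smul_smul]; norm_num
    have p1 : Q ((2 : ℝ) • (m + z)) + Q (u - v) = 2 * Q (u + z) + 2 * Q (v + z) := by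
      have := par (u + z) (v + z)
      rw [show (u + z) + (v + z) = (2 : ℝ) • (m + z) by rw [smul_add, hm2]; module,
        show (u + z) - (v + z) = u - v by abel] at this
      exact this
    have p2 : Q ((2 : ℝ) • m) + Q (u - v) = 2 * Q u + 2 * Q v := by
      have := par u v
      rw [← hm2] at this
      exact this
    have q1 : Q ((2 : ℝ) • (m + z)) = 4 * Q (m + z) := by rw [hhom]; norm_num
    have q2 : Q ((2 : ℝ) • m) = 4 * Q m := by rw [hhom]; norm_num
    have h1 : D (u + v) z = 2 * D m z := by
      rw [← hm2, show D ((2 : ℝ) • m) z = 2 * D m z from smulD 2 m z]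
    rw [h1]
    simp only [hD]
    rw [q1] at p1; rw [q2] at p2
    linarith
  have Dsym : ∀ u v : V, D u v = D v u := by
    intro u v; simp only [hD]; rw [add_comm]; ring
  refine ⟨LinearMap.mk₂ ℝ D addD (fun c m n => by rw [smulD]; rfl)
    (fun m n p => by rw [Dsym, addD, Dsym n m, Dsym p m])
    (fun c m n => by rw [Dsym, smulD, Dsym n m]; rfl), ?_, ?_, ?_⟩
  · intro u v; simp only [LinearMap.mk₂_apply]; exact Dsym u v
  · intro v
    simp only [LinearMap.mk₂_apply, hD]
    have : Q (v + v) = 4 * Q v := by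
      rw [show v + v = (2 : ℝ) • v by rw [two_smul], hhom]; norm_num
    rw [this]; ring
  · intro u v; rfl
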